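/- Let 𝒜 be an abelian category, f : A ⟶ B a morphism, and α : Ker f ⟶ G an epimorphism with kernel N, so that N is a subobject of Ker f and hence of A via the composite monomorphism N ⟶ Ker f ⟶ A. Let q : A ⟶ A/N be the cokernel of this monomorphism, and form the pushout of f along q, with induced morphism f' : A/N ⟶ Y. Then the kernel of f' is isomorphic to G; more precisely, the canonical morphism from Ker f to Ker f' induced by the pushout square coincides (under this isomorphism) with α. In particular, every epimorphism out of Ker f is realized as the induced morphism between kernels of a pushout of f. -/

import Mathlib

open CategoryTheory CategoryTheory.Limits

universe v u

noncomputable def inducedKernelMap {C : Type u} [Category.{v} C] [Abelian C]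
    {A B G : C} (f : A ⟶ B) (α : kernel f ⟶ G) :
    kernel f ⟶ kernel (pushout.inr f (cokernel.π (kernel.ι α ≫ kernel.ι f))) :=
  kernel.lift _ (kernel.ι f ≫ cokernel.π (kernel.ι α ≫ kernel.ι f)) (by
    rw [Category.assoc, ← pushout.condition, ← Category.assoc, kernel.condition,
      zero_comp])

section Aux

variable {C : Type u} [Category.{v} C] [Abelian C]
    {A B G : C} (f : A ⟶ B) (α : kernel f ⟶ G)

local notation "k" => kernel.ι α ≫ kernel.ι f
local notation "q" => cokernel.π (kernel.ι α ≫ kernel.ι f)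

/-- `f` factors through `A/N`. -/
noncomputable def fbar : cokernel (kernel.ι α ≫ kernel.ι f) ⟶ B :=
  cokernel.desc _ f (by simp)

lemma pi_fbar : cokernel.π (kernel.ι α ≫ kernel.ι f) ≫ fbar f α = f := by
  simp [fbar]

/-- The retraction of `pushout.inl`. -/
noncomputable def pushoutDesc :
    pushout f (cokernel.π (kernel.ι α ≫ kernel.ι f)) ⟶ B :=
  pushout.desc (𝟙 B) (fbar f α) (by rw [Category.comp_id, pi_fbar])

lemma inl_pushoutDesc : pushout.inl f q ≫ pushoutDesc f α = 𝟙 B := by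
  exact pushout.inl_desc _ _ _

instance mono_inl : Mono (pushout.inl f (cokernel.π (kernel.ι α ≫ kernel.ι f))) :=
  mono_of_mono_fac (inl_pushoutDesc f α)

end Aux

section Main

variable {C : Type u} [Category.{v} C] [Abelian C]
    {A B G : C} (f : A ⟶ B) (α : kernel f ⟶ G)

open CategoryTheory.Abelian.Pseudoelement

lemma inducedKernelMap_ι :
    inducedKernelMap f α ≫ kernel.ι (pushout.inr f (cokernel.π (kernel.ι α ≫ kernel.ι f)))
      = kernel.ι f ≫ cokernel.π (kernel.ι α ≫ kernel.ι f) := by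
  simp [inducedKernelMap]

lemma epi_inducedKernelMap : Epi (inducedKernelMap f α) := by
  apply epi_of_pseudo_surjective
  intro x
  obtain ⟨a, ha⟩ := pseudo_surjective_of_epi (cokernel.π (kernel.ι α ≫ kernel.ι f))
    (pseudoApply (kernel.ι (pushout.inr f (cokernel.π (kernel.ι α ≫ kernel.ι f)))) x)
  have hfa : pseudoApply f a = 0 := by
    apply pseudo_injective_of_mono (pushout.inl f (cokernel.π (kernel.ι α ≫ kernel.ι f)))
    rw [← Abelian.Pseudoelement.comp_apply, pushout.condition,
      Abelian.Pseudoelement.comp_apply, ha, ← Abelian.Pseudoelement.comp_apply,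
      kernel.condition, Abelian.Pseudoelement.zero_apply, apply_zero]
  obtain ⟨y, hy⟩ := pseudo_exact_of_exact (ShortComplex.exact_kernel f) a hfa
  refine ⟨y, pseudo_injective_of_mono
    (kernel.ι (pushout.inr f (cokernel.π (kernel.ι α ≫ kernel.ι f)))) ?_⟩
  rw [← Abelian.Pseudoelement.comp_apply, inducedKernelMap_ι,
    Abelian.Pseudoelement.comp_apply]
  exact hy ▸ ha

lemma kernel_ι_comp_inducedKernelMap :
    kernel.ι α ≫ inducedKernelMap f α = 0 := by
  rw [← cancel_mono (kernel.ι (pushout.inr f (cokernel.π (kernel.ι α ≫ kernel.ι f)))),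
    Category.assoc, inducedKernelMap_ι, ← Category.assoc, cokernel.condition, zero_comp]

lemma kernel_ι_inducedKernelMap_comp_α :
    kernel.ι (inducedKernelMap f α) ≫ α = 0 := by
  set q := cokernel.π (kernel.ι α ≫ kernel.ι f)
  set f' := pushout.inr f q
  have h1 : (kernel.ι (inducedKernelMap f α) ≫ kernel.ι f) ≫ q = 0 := by
    rw [Category.assoc, ← inducedKernelMap_ι, ← Category.assoc, kernel.condition, zero_comp]
  -- the mono k is the kernel of its cokernel q
  obtain ⟨t, ht⟩ := KernelFork.IsLimit.lift'
    (Abelian.monoIsKernelOfCokernel _ (cokernelIsCokernel (kernel.ι α ≫ kernel.ι f)))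
    _ h1
  dsimp at ht
  have ht' : t ≫ kernel.ι α = kernel.ι (inducedKernelMap f α) := by
    rw [← cancel_mono (kernel.ι f), Category.assoc, ht]
  rw [← ht', Category.assoc, kernel.condition, comp_zero]

end Main

theorem kernel_pushout_realizes_epi {C : Type u} [Category.{v} C] [Abelian C]
    {A B G : C} (f : A ⟶ B) (α : kernel f ⟶ G) [Epi α] :
    ∃ e : kernel (pushout.inr f (cokernel.π (kernel.ι α ≫ kernel.ι f))) ≅ G,
      inducedKernelMap f α ≫ e.hom = α := by
  have hepi : Epi (inducedKernelMap f α) := epi_inducedKernelMap f α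
  set g := inducedKernelMap f α
  let h : kernel (pushout.inr f (cokernel.π (kernel.ι α ≫ kernel.ι f))) ⟶ G :=
    Abelian.epiDesc g α (kernel_ι_inducedKernelMap_comp_α f α)
  let h' : G ⟶ kernel (pushout.inr f (cokernel.π (kernel.ι α ≫ kernel.ι f))) :=
    Abelian.epiDesc α g (kernel_ι_comp_inducedKernelMap f α)
  have hg : g ≫ h = α := Abelian.comp_epiDesc _ _ _
  have hα : α ≫ h' = g := Abelian.comp_epiDesc _ _ _
  refine ⟨⟨h, h', ?_, ?_⟩, hg⟩
  · rw [← cancel_epi g, ← Category.assoc, hg, hα, Category.comp_id]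
  · rw [← cancel_epi α, ← Category.assoc, hα, hg, Category.comp_id]
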